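/- Let F be a field, let D be an associative F-algebra, and let τ : D → F be an F-linear map with τ(xy) = τ(yx) for all x, y ∈ D which is nondegenerate, i.e. τ(xz) = 0 for all z ∈ D implies x = 0. Let m ≥ 1, Y = Σ_{i=1}^{m-1} E_{i,i+1} ∈ M_m(D), Tr_τ(M) = τ(Σ_i M_{i,i}), B_Y(A,B) = Tr_τ(Y(AB − BA)), and c = {C ∈ M_m(D) : C_{i,m} = 0 for all i}. Then B_Y restricted to c × c is a nondegenerate alternating bilinear form: B_Y(A,A) = 0 for all A ∈ c, and if A ∈ c satisfies B_Y(A,B) = 0 for all B ∈ c, then A = 0. -/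
import Mathlib

/-- Let `F` be a field, `D` an associative `F`-algebra, and
`τ : D → F` an `F`-linear map with `τ(xy) = τ(yx)` which is nondegenerate. Let
`m ≥ 1`, `Y = Σ_{i=1}^{m-1} E_{i,i+1}`, `B_Y(A,B) = Tr_τ(Y(AB − BA))` and `c`
the matrices with vanishing last column. Then `B_Y` restricted to `c × c` is a
nondegenerate alternating bilinear form. -/
theorem generalized_local_coefficients_stmt8
    {F D : Type*} [Field F] [Ring D] [Algebra F D]
    (τ : D →ₗ[F] F) (hτ : ∀ x y : D, τ (x * y) = τ (y * x))
    (hnd : ∀ x : D, (∀ z : D, τ (x * z) = 0) → x = 0)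
    (m : ℕ) (hm : 1 ≤ m)
    (Y : Matrix (Fin m) (Fin m) D)
    (hY : ∀ i j : Fin m, Y i j = if (i : ℕ) + 1 = (j : ℕ) then 1 else 0) :
    (∀ A : Matrix (Fin m) (Fin m) D, (∀ i : Fin m, A i ⟨m - 1, by omega⟩ = 0) →
        τ (∑ i, (Y * (A * A - A * A)) i i) = 0) ∧
      (∀ A : Matrix (Fin m) (Fin m) D, (∀ i : Fin m, A i ⟨m - 1, by omega⟩ = 0) →
        (∀ B : Matrix (Fin m) (Fin m) D, (∀ i : Fin m, B i ⟨m - 1, by omega⟩ = 0) →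
          τ (∑ i, (Y * (A * B - B * A)) i i) = 0) → A = 0) := by
  have trace_formula : ∀ M : Matrix (Fin m) (Fin m) D,
      ∑ j, (Y * M) j j
        = ∑ j : Fin m, (if h : (j : ℕ) + 1 < m then M ⟨(j : ℕ) + 1, h⟩ j else 0) := by
    intro M
    refine Finset.sum_congr rfl fun j _ => ?_
    rw [Matrix.mul_apply]
    simp only [hY, ite_mul, one_mul, zero_mul]
    by_cases h : (j : ℕ) + 1 < m
    · rw [dif_pos h, Finset.sum_eq_single (⟨(j : ℕ) + 1, h⟩ : Fin m)]
      · simp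
      · intro t _ ht
        rw [if_neg]
        intro he
        exact ht (Fin.ext he.symm)
      · simp
    · rw [dif_neg h, Finset.sum_eq_zero]
      intro t _
      rw [if_neg]
      intro he
      exact h (he ▸ t.isLt)
  constructor
  · intro A _
    simp
  · intro A hA hB
    -- key relation
    have key : ∀ (i k : Fin m) (hi : (i : ℕ) + 1 < m) (z : D),
        τ (A ⟨(i : ℕ) + 1, hi⟩ k * z)
          = if h : 1 ≤ (k : ℕ) then τ (A i ⟨(k : ℕ) - 1, by omega⟩ * z) else 0 := by
      intro i k hi z
      set B := Matrix.single k i z with hBdef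
      have hBc : ∀ r : Fin m, B r ⟨m - 1, by omega⟩ = 0 := by
        intro r
        simp only [hBdef, Matrix.single, Matrix.of_apply]
        rw [if_neg]
        rintro ⟨-, h2⟩
        have : (i : ℕ) = m - 1 := by rw [h2]
        omega
      have h0 := hB B hBc
      have e1 : (∑ j, (Y * (A * B)) j j) = A ⟨(i : ℕ) + 1, hi⟩ k * z := by
        rw [trace_formula]
        have hAB : ∀ (p q : Fin m), (A * B) p q = if i = q then A p k * z else 0 := by
          intro p q
          rw [Matrix.mul_apply]
          by_cases hq : i = q
          · subst hq
            rw [if_pos rfl, Finset.sum_eq_single k]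
            · simp [hBdef, Matrix.single]
            · intro t _ ht
              simp [hBdef, Matrix.single, Ne.symm ht]
            · simp
          · rw [if_neg hq, Finset.sum_eq_zero]
            intro t _
            simp [hBdef, Matrix.single, hq]
        rw [Finset.sum_eq_single i]
        · rw [dif_pos hi, hAB, if_pos rfl]
        · intro t _ ht
          by_cases h : (t : ℕ) + 1 < m
          · rw [dif_pos h, hAB, if_neg (Ne.symm ht)]
          · rw [dif_neg h]
        · simp
      have e2 : (∑ j, (Y * (B * A)) j j)
          = if h : 1 ≤ (k : ℕ) then z * A i ⟨(k : ℕ) - 1, by omega⟩ else 0 := by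
        rw [trace_formula]
        have hBA : ∀ (p q : Fin m), (B * A) p q = if k = p then z * A i q else 0 := by
          intro p q
          rw [Matrix.mul_apply]
          by_cases hp : k = p
          · subst hp
            rw [if_pos rfl, Finset.sum_eq_single i]
            · simp [hBdef, Matrix.single]
            · intro t _ ht
              simp [hBdef, Matrix.single, Ne.symm ht]
            · simp
          · rw [if_neg hp, Finset.sum_eq_zero]
            intro t _
            simp [hBdef, Matrix.single, hp]
        by_cases hk : 1 ≤ (k : ℕ)
        · rw [dif_pos hk]
          rw [Finset.sum_eq_single (⟨(k : ℕ) - 1, by omega⟩ : Fin m)]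
          · rw [dif_pos (by simp; omega), hBA, if_pos (by apply Fin.ext; simp; omega)]
          · intro t _ ht
            by_cases h : (t : ℕ) + 1 < m
            · rw [dif_pos h, hBA, if_neg]
              intro he
              apply ht
              apply Fin.ext
              have : (k : ℕ) = (t : ℕ) + 1 := by rw [he]
              simp
              omega
            · rw [dif_neg h]
          · simp
        · rw [dif_neg hk]
          rw [Finset.sum_eq_zero]
          intro t _
          by_cases h : (t : ℕ) + 1 < m
          · rw [dif_pos h, hBA, if_neg]
            intro he
            have : (k : ℕ) = (t : ℕ) + 1 := by rw [he]
            omega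
          · rw [dif_neg h]
      have hsplit : (∑ j, (Y * (A * B - B * A)) j j)
          = (∑ j, (Y * (A * B)) j j) - (∑ j, (Y * (B * A)) j j) := by
        rw [← Finset.sum_sub_distrib]
        refine Finset.sum_congr rfl fun j _ => ?_
        rw [Matrix.mul_sub]
        simp [Matrix.sub_apply]
      rw [hsplit, e1, e2] at h0
      rw [map_sub] at h0
      by_cases hk : 1 ≤ (k : ℕ)
      · rw [dif_pos hk] at h0 ⊢
        rw [hτ z] at h0
        exact sub_eq_zero.mp h0
      · rw [dif_neg hk] at h0 ⊢
        simpa using h0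
    -- upward chain along diagonal to the last column
    have up : ∀ t : ℕ, ∀ p q : Fin m, (q : ℕ) + t = m - 1 → (p : ℕ) ≤ (q : ℕ) →
        ∀ z : D, τ (A p q * z) = 0 := by
      intro t
      induction t with
      | zero =>
        intro p q hq _ z
        have : q = ⟨m - 1, by omega⟩ := Fin.ext (by simp; omega)
        rw [this, hA p]
        simp
      | succ t ih =>
        intro p q hq hpq z
        have hq1 : (q : ℕ) + 1 < m := by omega
        have hp1 : (p : ℕ) + 1 < m := by omega
        have hk := key p ⟨(q : ℕ) + 1, hq1⟩ hp1 z
        rw [dif_pos (by simp)] at hk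
        have hq' : (⟨(q : ℕ) + 1, hq1⟩ : Fin m) = ⟨(q : ℕ) + 1, hq1⟩ := rfl
        have e : (⟨((⟨(q : ℕ) + 1, hq1⟩ : Fin m) : ℕ) - 1, by omega⟩ : Fin m) = q :=
          Fin.ext (by simp)
        rw [e] at hk
        rw [← hk]
        exact ih ⟨(p : ℕ) + 1, hp1⟩ ⟨(q : ℕ) + 1, hq1⟩ (by simp; omega) (by simp; omega) z
    -- downward chain to the first column
    have down : ∀ q' : ℕ, ∀ p q : Fin m, (q : ℕ) = q' → (q : ℕ) < (p : ℕ) →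
        ∀ z : D, τ (A p q * z) = 0 := by
      intro q'
      induction q' with
      | zero =>
        intro p q hq hlt z
        have hp : (p : ℕ) - 1 + 1 < m := by omega
        have hk := key ⟨(p : ℕ) - 1, by omega⟩ q (by simpa using hp) z
        rw [dif_neg (by omega)] at hk
        have e : (⟨((⟨(p : ℕ) - 1, by omega⟩ : Fin m) : ℕ) + 1, by simpa using hp⟩ : Fin m) = p :=
          Fin.ext (by simp; omega)
        rwa [e] at hk
      | succ t ih =>
        intro p q hq hlt z
        have hp : (p : ℕ) - 1 + 1 < m := by omega
        have hk := key ⟨(p : ℕ) - 1, by omega⟩ q (by simpa using hp) z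
        rw [dif_pos (by omega)] at hk
        have e : (⟨((⟨(p : ℕ) - 1, by omega⟩ : Fin m) : ℕ) + 1, by simpa using hp⟩ : Fin m) = p :=
          Fin.ext (by simp; omega)
        rw [e] at hk
        rw [hk]
        exact ih ⟨(p : ℕ) - 1, by omega⟩ ⟨(q : ℕ) - 1, by omega⟩ (by simp; omega)
          (by simp; omega) z
    have main : ∀ (p q : Fin m) (z : D), τ (A p q * z) = 0 := by
      intro p q z
      rcases le_or_gt (p : ℕ) (q : ℕ) with h | h
      · exact up (m - 1 - (q : ℕ)) p q (by omega) h z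
      · exact down (q : ℕ) p q rfl h z
    ext p q
    simpa using hnd _ (main p q)
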